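/- Let X be a real Banach space and J a closed subspace which is an M-summand of X, i.e., there is a bounded linear projection P : X → X with range J such that ‖x‖ = max(‖P x‖, ‖x − P x‖) for all x ∈ X. Then the pair (X, J) has the quotient lifting property (QLP). -/

import Mathlib

/-- If `J` is an M-summand of a Banach space `X`, then the pair `(X, J)`
has the quotient lifting property (QLP). -/
theorem qlp_of_M_summand
    {X : Type*} [NormedAddCommGroup X] [NormedSpace ℝ X] [CompleteSpace X]
    (J : Submodule ℝ X) (hJ : IsClosed (J : Set X))
    (P : X →L[ℝ] X) (hproj : ∀ x, P (P x) = P x)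
    (hrange : LinearMap.range (P : X →ₗ[ℝ] X) = J)
    (hM : ∀ x, ‖x‖ = max ‖P x‖ ‖x - P x‖) :
    ∀ (Y : Type*) [NormedAddCommGroup Y] [NormedSpace ℝ Y] [CompleteSpace Y]
      (S : Y →L[ℝ] X ⧸ J), ∃ T : Y →L[ℝ] X, (∀ y, J.mkQ (T y) = S y) ∧ ‖T‖ = ‖S‖ := by
  intro Y _ _ _ S
  set Q : X →L[ℝ] X := ContinuousLinearMap.id ℝ X - P with hQ
  have hQapply : ∀ x, Q x = x - P x := fun x => rfl
  -- Q vanishes on J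
  have hQJ : ∀ j ∈ J, Q j = 0 := by
    intro j hj
    rw [← hrange] at hj
    obtain ⟨x, rfl⟩ := hj
    simp [hQapply, hproj]
  have hker : J ≤ LinearMap.ker (Q : X →ₗ[ℝ] X) := fun j hj => by
    simpa using hQJ j hj
  -- the induced linear map on the quotient
  set L₀ : (X ⧸ J) →ₗ[ℝ] X := J.liftQ (Q : X →ₗ[ℝ] X) hker with hL₀
  have hL₀mk : ∀ x : X, L₀ (J.mkQ x) = Q x := fun x => rfl
  -- key isometry fact: ‖mkQ x‖ = ‖Q x‖
  have hnorm : ∀ x : X, ‖J.mkQ x‖ = ‖Q x‖ := by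
    intro x
    apply le_antisymm
    · -- quotient norm ≤ ‖Q x‖ since mkQ (Q x) = mkQ x
      have hmem : P x ∈ J := by rw [← hrange]; exact ⟨x, rfl⟩
      have : J.mkQ x = J.mkQ (Q x) := by
        rw [Submodule.mkQ_apply, Submodule.mkQ_apply, Submodule.Quotient.eq]
        simpa [hQapply] using hmem
      rw [this]
      exact Submodule.Quotient.norm_mk_le J (Q x)
    · -- ‖Q x‖ ≤ quotient norm: ε-argument
      by_contra h
      push_neg at h
      obtain ⟨a, ha, hna⟩ := Submodule.Quotient.norm_mk_lt (J.mkQ x) (by linarith : (0:ℝ) < ‖Q x‖ - ‖J.mkQ x‖)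
      have hQa : Q a = Q x := by
        have : a - x ∈ J := by
          rw [← Submodule.Quotient.eq]
          exact ha
        have h0 := hQJ _ this
        rw [map_sub, sub_eq_zero] at h0
        exact h0
      have hle : ‖Q a‖ ≤ ‖a‖ := by
        rw [hQapply]
        calc ‖a - P a‖ ≤ max ‖P a‖ ‖a - P a‖ := le_max_right _ _
          _ = ‖a‖ := (hM a).symm
      rw [hQa] at hle
      linarith
  -- L₀ is continuous
  have hL₀bound : ∀ v : X ⧸ J, ‖L₀ v‖ ≤ 1 * ‖v‖ := by
    intro v
    obtain ⟨x, rfl⟩ := Submodule.mkQ_surjective J v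
    rw [hL₀mk, one_mul, hnorm]
  set L : (X ⧸ J) →L[ℝ] X := L₀.mkContinuous 1 hL₀bound with hL
  refine ⟨L.comp S, ?_, ?_⟩
  · intro y
    obtain ⟨x, hx⟩ := Submodule.mkQ_surjective J (S y)
    have : L.comp S y = Q x := by
      simp only [ContinuousLinearMap.comp_apply, hL, ← hx]
      exact hL₀mk x
    rw [this, ← hx, Submodule.mkQ_apply, Submodule.mkQ_apply, Submodule.Quotient.eq]
    have hmem : P x ∈ J := by rw [← hrange]; exact ⟨x, rfl⟩
    simpa [hQapply] using (neg_mem hmem : -(P x) ∈ J)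
  · -- pointwise norms equal
    have hpt : ∀ y, ‖L.comp S y‖ = ‖S y‖ := by
      intro y
      obtain ⟨x, hx⟩ := Submodule.mkQ_surjective J (S y)
      have : L.comp S y = Q x := by
        simp only [ContinuousLinearMap.comp_apply, hL, ← hx]
        exact hL₀mk x
      rw [this, ← hx, hnorm]
    apply le_antisymm
    · exact ContinuousLinearMap.opNorm_le_bound _ (norm_nonneg S) fun y => by
        rw [hpt]; exact S.le_opNorm y
    · exact ContinuousLinearMap.opNorm_le_bound _ (norm_nonneg _) fun y => by
        rw [← hpt]; exact (L.comp S).le_opNorm y
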